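/- Let H be a connected Γ-graded algebra over a field k, {z_ξ}_{ξ∈Ξ} a family of homogeneous elements of H_+, ◁ a total order on Ξ, and h: Ξ → ℕ∪{∞} with h(ξ) ≥ 2 for each ξ, satisfying conditions (a)–(c). If the family {z_V : V ∈ P(Ξ,◁,h)} is linearly independent in H (respectively spans H), then for every total order < on Ξ the family {z_V : V ∈ P(Ξ,<,h)} is linearly independent in H (respectively spans H). -/

import Mathlib

open scoped TensorProduct
open Classical

noncomputable section

namespace AdamsPaper

variable {k : Type*} [Field k] {σ : Type*} {H : Type*}

/-- A connected `Γ`-graded algebra structure, `Γ = σ →₀ ℕ` a free abelian monoid. -/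
def IsConnGradedAlg [Nonempty σ] [DecidableEq σ] [Ring H] [Algebra k H]
    (𝒜 : (σ →₀ ℕ) → Submodule k H) : Prop :=
  DirectSum.IsInternal 𝒜 ∧ (1 : H) ∈ 𝒜 0 ∧
    (∀ α β : σ →₀ ℕ, ∀ x ∈ 𝒜 α, ∀ y ∈ 𝒜 β, x * y ∈ 𝒜 (α + β)) ∧
    Module.finrank k (𝒜 0) = 1

/-- A connected `Γ`-graded Hopf algebra: the grading is compatible with all structure maps. -/
def IsConnGradedHopf [Nonempty σ] [DecidableEq σ] [Ring H] [HopfAlgebra k H]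
    (𝒜 : (σ →₀ ℕ) → Submodule k H) : Prop :=
  IsConnGradedAlg (k := k) 𝒜 ∧
    (∀ γ : σ →₀ ℕ, ∀ x ∈ 𝒜 γ,
      Coalgebra.comul (R := k) x ∈
        ⨆ p : {p : (σ →₀ ℕ) × (σ →₀ ℕ) // p.1 + p.2 = γ},
          LinearMap.range (TensorProduct.mapIncl (𝒜 p.1.1) (𝒜 p.1.2))) ∧
    (∀ γ : σ →₀ ℕ, γ ≠ 0 → ∀ x ∈ 𝒜 γ, Coalgebra.counit (R := k) x = 0)

/-- Convolution product of linear endomorphisms of a bialgebra. -/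
def conv [Ring H] [Bialgebra k H] (f g : H →ₗ[k] H) : H →ₗ[k] H :=
  LinearMap.mul' k H ∘ₗ TensorProduct.map f g ∘ₗ Coalgebra.comul (R := k)

/-- The convolution unit `η ∘ ε`. -/
def convOne [Ring H] [Bialgebra k H] : H →ₗ[k] H :=
  Algebra.linearMap k H ∘ₗ Coalgebra.counit (R := k)

/-- Convolution powers. -/
def convPow [Ring H] [Bialgebra k H] (f : H →ₗ[k] H) : ℕ → (H →ₗ[k] H)
  | 0 => convOne
  | n + 1 => conv f (convPow f n)

/-- The Adams operators `Ψ_n`, `n ∈ ℤ`: convolution powers of the identity for `n ≥ 0`,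
convolution powers of the antipode for `n < 0`. -/
def adams [Ring H] [HopfAlgebra k H] (n : ℤ) : H →ₗ[k] H :=
  if 0 ≤ n then convPow (LinearMap.id : H →ₗ[k] H) n.toNat
  else convPow (HopfAlgebra.antipode (R := k) (A := H)) (-n).toNat

variable {Ξ : Type*}

/-- `z_V`, the ordered product of the family along a finite sequence `V`. -/
def zProd [Ring H] (z : Ξ → H) (V : List Ξ) : H := (V.map z).prod

/-- `|V|`, the degree of a finite sequence. -/
def degList (d : Ξ → σ →₀ ℕ) (V : List Ξ) : σ →₀ ℕ := (V.map d).sum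

/-- The number of occurrences of `ξ` in `V`. -/
def cnt (V : List Ξ) (ξ : Ξ) : ℕ := (V.map fun a => if a = ξ then 1 else 0).sum

/-- `V ∈ P(Ξ,◁,h)`: `V` is nondecreasing with respect to `◁` and each element occurs
fewer than `h ξ` times. -/
def Adm (lt : Ξ → Ξ → Prop) (h : Ξ → ℕ∞) (V : List Ξ) : Prop :=
  V.Chain' (fun a b => lt a b ∨ a = b) ∧ ∀ ξ : Ξ, (cnt V ξ : ℕ∞) < h ξ

/-- The subspace `H[ξ,◁,h]`: the span of the `z_V` with `V ∈ P(Ξ,◁,h)` whose last entry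
is `◁ ξ`. -/
def Hspan [Ring H] [Algebra k H] (z : Ξ → H) (lt : Ξ → Ξ → Prop) (h : Ξ → ℕ∞)
    (ξ : Ξ) : Submodule k H :=
  Submodule.span k {x : H | ∃ V : List Ξ, Adm lt h V ∧ (∀ ν ∈ V.getLast?, lt ν ξ) ∧
    x = zProd z V}

/-- `A_+`, the span of the components of nonzero degree of a (homogeneous) subspace `A`. -/
def posPart [Ring H] [Algebra k H] (𝒜 : (σ →₀ ℕ) → Submodule k H)
    (A : Submodule k H) : Submodule k H :=
  ⨆ γ : {γ : σ →₀ ℕ // γ ≠ 0}, A ⊓ 𝒜 γ.1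

/-- Comparison of two finite sequences of the same degree, reading from the left. -/
def ltFromLeft (lt : Ξ → Ξ → Prop) (U V : List Ξ) : Prop :=
  ∃ l : ℕ, 1 ≤ l ∧ l ≤ min U.length V.length ∧
    (∀ i : ℕ, i + 1 < l → U[i]? = V[i]?) ∧
    ∃ a b, U[l - 1]? = some a ∧ V[l - 1]? = some b ∧ lt a b

/-- The order `◁_L` on finite sequences. -/
def ltL (d : Ξ → σ →₀ ℕ) (lt : Ξ → Ξ → Prop) (U V : List Ξ) : Prop :=
  (∃ γ : σ →₀ ℕ, γ ≠ 0 ∧ degList d U + γ = degList d V) ∨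
    (degList d U = degList d V ∧ ltFromLeft lt U V)

/-- The order `◁_R` on finite sequences. -/
def ltR (d : Ξ → σ →₀ ℕ) (lt : Ξ → Ξ → Prop) (U V : List Ξ) : Prop :=
  (∃ γ : σ →₀ ℕ, γ ≠ 0 ∧ degList d U + γ = degList d V) ∨
    (degList d U = degList d V ∧ ltFromLeft lt U.reverse V.reverse)

end AdamsPaper

end

namespace AdamsPaper

noncomputable section Aux

open Relation

variable {σ : Type*} {Ξ : Type*}

/-- The reflexivization of `lt`. -/
def rr (lt : Ξ → Ξ → Prop) : Ξ → Ξ → Prop := fun a b => lt a b ∨ a = b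

variable {lt : Ξ → Ξ → Prop}

theorem rr_trans (hlt : IsStrictTotalOrder Ξ lt) : IsTrans Ξ (rr lt) := by
  haveI := hlt
  refine ⟨fun a b c hab hbc => ?_⟩
  rcases hab with h | rfl
  · rcases hbc with h' | rfl
    · exact Or.inl (trans_of lt h h')
    · exact Or.inl h
  · exact hbc

theorem rr_antisymm (hlt : IsStrictTotalOrder Ξ lt) : IsAntisymm Ξ (rr lt) := by
  haveI := hlt
  refine ⟨fun a b hab hba => ?_⟩
  rcases hab with h | rfl
  · rcases hba with h' | rfl
    · exact absurd (trans_of lt h h') (irrefl_of lt a)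
    · rfl
  · rfl

theorem rr_total (hlt : IsStrictTotalOrder Ξ lt) : IsTotal Ξ (rr lt) := by
  haveI := hlt
  refine ⟨fun a b => ?_⟩
  rcases trichotomous_of lt a b with h | h | h
  · exact Or.inl (Or.inl h)
  · exact Or.inl (Or.inr h)
  · exact Or.inr (Or.inl h)

/-- Degree of a multiset of letters. -/
def degm (d : Ξ → σ →₀ ℕ) (m : Multiset Ξ) : σ →₀ ℕ := (m.map d).sum

theorem degm_coe (d : Ξ → σ →₀ ℕ) (V : List Ξ) : degm d (↑V) = degList d V := rfl

theorem degm_add (d : Ξ → σ →₀ ℕ) (x y : Multiset Ξ) :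
    degm d (x + y) = degm d x + degm d y := by
  simp [degm]

theorem le_degm (d : Ξ → σ →₀ ℕ) {m : Multiset Ξ} {ξ : Ξ} (hm : ξ ∈ m) :
    d ξ ≤ degm d m := by
  refine Multiset.single_le_sum (fun x hx => ?_) _ (Multiset.mem_map_of_mem d hm)
  exact zero_le

/-- One Dershowitz–Manna-style step (with degree control). -/
def MStep (d : Ξ → σ →₀ ℕ) (lt : Ξ → Ξ → Prop) (x y : Multiset Ξ) : Prop :=
  degm d x ≤ degm d y ∧ ∃ C add rem : Multiset Ξ, rem ≠ 0 ∧ y = C + rem ∧ x = C + add ∧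
    ∀ a ∈ add, ∃ b ∈ rem, lt a b

/-- The transitive closure of `MStep`. -/
def Mlt (d : Ξ → σ →₀ ℕ) (lt : Ξ → Ξ → Prop) : Multiset Ξ → Multiset Ξ → Prop :=
  Relation.TransGen (MStep d lt)

theorem Mlt.trans {d : Ξ → σ →₀ ℕ} {x y w : Multiset Ξ}
    (h : Mlt d lt x y) (h' : Mlt d lt y w) : Mlt d lt x w :=
  Relation.TransGen.trans h h'

theorem MStep.mlt {d : Ξ → σ →₀ ℕ} {x y : Multiset Ξ} (h : MStep d lt x y) : Mlt d lt x y :=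
  Relation.TransGen.single h

theorem Mlt.degm_le {d : Ξ → σ →₀ ℕ} {x y : Multiset Ξ} (h : Mlt d lt x y) :
    degm d x ≤ degm d y := by
  induction h with
  | single h => exact h.1
  | tail _ h ih => exact ih.trans h.1

theorem MStep.add_right {d : Ξ → σ →₀ ℕ} {x y : Multiset Ξ} (w : Multiset Ξ)
    (h : MStep d lt x y) : MStep d lt (x + w) (y + w) := by
  obtain ⟨hdeg, C, add, rem, hrem, hy, hx, hab⟩ := h
  refine ⟨?_, C + w, add, rem, hrem, ?_, ?_, hab⟩
  · simp only [degm_add]; exact add_le_add_left hdeg _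
  · rw [hy, add_right_comm]
  · rw [hx, add_right_comm]

theorem Mlt.add_right {d : Ξ → σ →₀ ℕ} {x y : Multiset Ξ} (w : Multiset Ξ)
    (h : Mlt d lt x y) : Mlt d lt (x + w) (y + w) := by
  induction h with
  | single h => exact (h.add_right w).mlt
  | tail _ h ih => exact ih.trans (h.add_right w).mlt

theorem Mlt.add_left {d : Ξ → σ →₀ ℕ} {x y : Multiset Ξ} (w : Multiset Ξ)
    (h : Mlt d lt x y) : Mlt d lt (w + x) (w + y) := by
  simpa [add_comm] using h.add_right w

/-- Removing a nonempty part is an `MStep`. -/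
theorem MStep.of_le_add {d : Ξ → σ →₀ ℕ} {rem : Multiset Ξ} (x : Multiset Ξ) (hrem : rem ≠ 0) :
    MStep d lt x (x + rem) := by
  refine ⟨by simp [degm_add], x, 0, rem, hrem, rfl, by simp, by simp⟩

end Aux
noncomputable section Aux2

variable {σ : Type*} {Ξ : Type*} {lt : Ξ → Ξ → Prop}

/-- Sorted list of a multiset w.r.t. `rr lt`. -/
def sortL (hlt : IsStrictTotalOrder Ξ lt) (m : Multiset Ξ) : List Ξ :=
  @Multiset.sort _ m (rr lt) (Classical.decRel _) (rr_trans hlt) (rr_antisymm hlt) (rr_total hlt)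

theorem sortL_sorted (hlt : IsStrictTotalOrder Ξ lt) (m : Multiset Ξ) :
    List.Pairwise (rr lt) (sortL hlt m) :=
  @Multiset.pairwise_sort _ m (rr lt) (Classical.decRel _) (rr_trans hlt) (rr_antisymm hlt)
    (rr_total hlt)

theorem sortL_coe (hlt : IsStrictTotalOrder Ξ lt) (m : Multiset Ξ) :
    ((sortL hlt m : List Ξ) : Multiset Ξ) = m :=
  @Multiset.sort_eq _ m (rr lt) (Classical.decRel _) (rr_trans hlt) (rr_antisymm hlt)
    (rr_total hlt)

theorem sorted_unique (hlt : IsStrictTotalOrder Ξ lt) {V W : List Ξ}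
    (hV : List.Pairwise (rr lt) V) (hW : List.Pairwise (rr lt) W)
    (h : (V : Multiset Ξ) = (W : Multiset Ξ)) : V = W := by
  haveI := rr_antisymm hlt
  exact List.Perm.eq_of_pairwise (fun a b _ _ hab hba => (rr_antisymm hlt).antisymm a b hab hba) hV hW
    (Multiset.coe_eq_coe.mp h)

theorem eq_sortL (hlt : IsStrictTotalOrder Ξ lt) {V : List Ξ}
    (hV : List.Pairwise (rr lt) V) : V = sortL hlt (V : Multiset Ξ) :=
  sorted_unique hlt hV (sortL_sorted hlt _) (sortL_coe hlt _).symm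

theorem cnt_eq_count [DecidableEq Ξ] (V : List Ξ) (ξ : Ξ) :
    cnt V ξ = Multiset.count ξ (V : Multiset Ξ) := by
  induction V with
  | nil => rfl
  | cons a V ih =>
    have : ((a :: V : List Ξ) : Multiset Ξ) = a ::ₘ (V : Multiset Ξ) := rfl
    rw [this, Multiset.count_cons]
    simp only [cnt, List.map_cons, List.sum_cons] at ih ⊢
    by_cases hx : a = ξ
    · subst hx; simp [ih]; ring
    · have hx' : ¬ ξ = a := fun h => hx h.symm
      simp [hx, hx', ih]

/-- `Adm` in terms of `Sorted` and multiset counts. -/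
theorem adm_iff (hlt : IsStrictTotalOrder Ξ lt) {h : Ξ → ℕ∞} {V : List Ξ} :
    Adm lt h V ↔ List.Pairwise (rr lt) V ∧
      ∀ ξ : Ξ, (Multiset.count ξ (V : Multiset Ξ) : ℕ∞) < h ξ := by
  haveI := rr_trans hlt
  unfold Adm
  rw [show (fun a b => lt a b ∨ a = b) = rr lt from rfl,
    show List.Chain' (rr lt) V ↔ List.Pairwise (rr lt) V from List.isChain_iff_pairwise]
  constructor
  · rintro ⟨h1, h2⟩
    exact ⟨h1, fun ξ => by rw [← cnt_eq_count]; exact h2 ξ⟩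
  · rintro ⟨h1, h2⟩
    exact ⟨h1, fun ξ => by rw [cnt_eq_count]; exact h2 ξ⟩

theorem adm_sortL (hlt : IsStrictTotalOrder Ξ lt) {h : Ξ → ℕ∞} {m : Multiset Ξ}
    (hm : ∀ ξ : Ξ, (Multiset.count ξ m : ℕ∞) < h ξ) : Adm lt h (sortL hlt m) := by
  rw [adm_iff hlt]
  refine ⟨sortL_sorted hlt m, fun ξ => ?_⟩
  rw [sortL_coe hlt]
  exact hm ξ

/-- In a sorted list whose last entry is `lt`-below `ξ₀`, every entry is `lt`-below `ξ₀`. -/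
theorem all_lt_of_sorted_getLast (hlt : IsStrictTotalOrder Ξ lt) {U : List Ξ} {ξ₀ : Ξ}
    (hU : List.Pairwise (rr lt) U) (hlast : ∀ ν ∈ U.getLast?, lt ν ξ₀) :
    ∀ x ∈ U, lt x ξ₀ := by
  haveI := hlt
  induction U with
  | nil => intro x hx; cases hx
  | cons a U ih =>
    intro x hx
    cases U with
    | nil =>
      have hxa := List.mem_singleton.mp hx
      subst hxa
      exact hlast x (by simp)
    | cons b U' =>
      have hlast' : ∀ ν ∈ (b :: U').getLast?, lt ν ξ₀ := by
        intro ν hν; exact hlast ν (by rwa [List.getLast?_cons_cons])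
      have htail := ih hU.of_cons hlast'
      rcases List.mem_cons.mp hx with rfl | hx'
      · -- x = a; use r a (getLast (b::U')) and lt (getLast) ξ₀
        have hglmem : (b :: U').getLast (by simp) ∈ (b :: U') := List.getLast_mem _
        have hra : rr lt x ((b :: U').getLast (by simp)) :=
          (List.pairwise_cons.mp hU).1 _ hglmem
        have hgl : lt ((b :: U').getLast (by simp)) ξ₀ :=
          hlast' _ (List.getLast?_eq_getLast (by simp))
        rcases hra with h | h
        · exact trans_of lt h hgl
        · rw [h]; exact hgl
      · exact htail x hx'

/-- A nonempty multiset has a maximum w.r.t. a strict total order. -/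
theorem exists_max_multiset (hlt : IsStrictTotalOrder Ξ lt) {s : Multiset Ξ} (hs : s ≠ 0) :
    ∃ b ∈ s, ∀ x ∈ s, rr lt x b := by
  haveI := hlt
  induction s using Multiset.induction_on with
  | empty => exact absurd rfl hs
  | cons a t ih =>
    rcases eq_or_ne t 0 with rfl | ht
    · exact ⟨a, Multiset.mem_cons_self a 0, by
        intro x hx
        rcases Multiset.mem_cons.mp hx with rfl | hx'
        · exact Or.inr rfl
        · simp at hx'⟩
    · obtain ⟨b, hb, hmax⟩ := ih ht
      rcases trichotomous_of lt a b with hab | hab | hab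
      · refine ⟨b, Multiset.mem_cons_of_mem hb, fun x hx => ?_⟩
        rcases Multiset.mem_cons.mp hx with rfl | hx'
        · exact Or.inl hab
        · exact hmax x hx'
      · subst hab
        refine ⟨a, Multiset.mem_cons_self a t, fun x hx => ?_⟩
        rcases Multiset.mem_cons.mp hx with rfl | hx'
        · exact Or.inr rfl
        · exact hmax x hx'
      · refine ⟨a, Multiset.mem_cons_self a t, fun x hx => ?_⟩
        rcases Multiset.mem_cons.mp hx with rfl | hx'
        · exact Or.inr rfl
        · rcases hmax x hx' with h | h
          · exact Or.inl (trans_of lt h hab)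
          · subst h; exact Or.inl hab

end Aux2
noncomputable section Aux3

open Relation

variable {σ : Type*} [DecidableEq σ] {Ξ : Type*} {lt : Ξ → Ξ → Prop} {d : Ξ → σ →₀ ℕ}

theorem wfOn_biUnion (hlt : IsStrictTotalOrder Ξ lt)
    (hwell : ∀ γ : σ →₀ ℕ, WellFounded (fun u v : {ξ : Ξ // d ξ = γ} => lt u.1 v.1))
    (s : Finset (σ →₀ ℕ)) : Set.WellFoundedOn (⋃ δ ∈ s, {ξ : Ξ | d ξ = δ}) lt := by
  haveI := hlt
  classical
  induction s using Finset.induction_on with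
  | empty => simpa using Set.wellFoundedOn_empty lt
  | insert _ _ hnot ih =>
    rename_i δ s
    rw [Finset.set_biUnion_insert]
    refine Set.WellFoundedOn.union ?_ ih
    have : Set.WellFoundedOn {ξ : Ξ | d ξ = δ} lt := by
      have := hwell δ
      exact InvImage.wf (fun (x : {ξ : Ξ | d ξ = δ}) => (⟨x.1, x.2⟩ : {ξ : Ξ // d ξ = δ})) this
    exact this

theorem wf_le_deg (hlt : IsStrictTotalOrder Ξ lt)
    (hwell : ∀ γ : σ →₀ ℕ, WellFounded (fun u v : {ξ : Ξ // d ξ = γ} => lt u.1 v.1))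
    (γ : σ →₀ ℕ) : WellFounded (fun u v : {ξ : Ξ // d ξ ≤ γ} => lt u.1 v.1) := by
  have h1 : Set.WellFoundedOn {ξ : Ξ | d ξ ≤ γ} lt := by
    refine Set.WellFoundedOn.subset (wfOn_biUnion hlt hwell (Finset.Iic γ)) ?_
    intro ξ hξ
    exact Set.mem_biUnion (Finset.mem_Iic.mpr hξ) rfl
  exact InvImage.wf (fun (x : {ξ : Ξ // d ξ ≤ γ}) => (⟨x.1, x.2⟩ : {ξ : Ξ | d ξ ≤ γ})) h1

/-- The count measure of a multiset supported on letters of degree `≤ γ`. -/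
def cmeasure (γ : σ →₀ ℕ) (x : {m : Multiset Ξ // degm d m ≤ γ}) :
    {ξ : Ξ // d ξ ≤ γ} →₀ ℕ :=
  Multiset.toFinsupp
    (x.1.attach.map fun y => (⟨y.1, le_trans (le_degm d y.2) x.2⟩ : {ξ : Ξ // d ξ ≤ γ}))

theorem cmeasure_apply (γ : σ →₀ ℕ) (x : {m : Multiset Ξ // degm d m ≤ γ})
    (t : {ξ : Ξ // d ξ ≤ γ}) : cmeasure γ x t = Multiset.count t.1 x.1 := by
  classical
  rw [cmeasure]
  rw [Multiset.toFinsupp_apply]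
  by_cases ht : t.1 ∈ x.1
  · have hinj : Function.Injective
        (fun y : {a // a ∈ x.1} => (⟨y.1, le_trans (le_degm d y.2) x.2⟩ : {ξ : Ξ // d ξ ≤ γ})) := by
      intro a b hab
      simp only [Subtype.mk.injEq] at hab
      exact Subtype.ext hab
    have key := Multiset.count_map_eq_count'
      (fun y : {a // a ∈ x.1} => (⟨y.1, le_trans (le_degm d y.2) x.2⟩ : {ξ : Ξ // d ξ ≤ γ}))
      x.1.attach hinj ⟨t.1, ht⟩
    rw [Multiset.count_attach] at key
    have ht' : t = (⟨t.1, le_trans (le_degm d ht) x.2⟩ : {ξ : Ξ // d ξ ≤ γ}) := Subtype.ext rfl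
    rw [ht']
    exact key
  · rw [Multiset.count_eq_zero_of_notMem ht, Multiset.count_eq_zero]
    intro hmem
    obtain ⟨y, hy, hyt⟩ := Multiset.mem_map.mp hmem
    apply ht
    have : y.1 = t.1 := congrArg Subtype.val hyt
    rw [← this]; exact y.2

theorem mstep_lex (hlt : IsStrictTotalOrder Ξ lt) (γ : σ →₀ ℕ)
    {x y : {m : Multiset Ξ // degm d m ≤ γ}} (h : MStep d lt x.1 y.1) :
    Finsupp.Lex (fun a b : {ξ : Ξ // d ξ ≤ γ} => lt b.1 a.1) (· < ·)
      (cmeasure γ x) (cmeasure γ y) := by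
  haveI := hlt
  classical
  obtain ⟨hdeg, C, add, rem, hrem, hy, hx, hab⟩ := h
  obtain ⟨b, hb, hbmax⟩ := exists_max_multiset hlt hrem
  have hbm : b ∈ y.1 := by rw [hy]; exact Multiset.mem_add.mpr (Or.inr hb)
  have hbγ : d b ≤ γ := le_trans (le_degm d hbm) y.2
  rw [Finsupp.lex_def]
  refine ⟨⟨b, hbγ⟩, ?_, ?_⟩
  · intro i hi
    -- `lt b i.1`; counts agree
    rw [cmeasure_apply, cmeasure_apply, hx, hy, Multiset.count_add, Multiset.count_add]
    have hadd : Multiset.count i.1 add = 0 := by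
      rw [Multiset.count_eq_zero]
      intro hmem
      obtain ⟨b', hb', hltb'⟩ := hab _ hmem
      rcases hbmax b' hb' with h' | rfl
      · exact absurd (trans_of lt (trans_of lt hltb' h') hi) (irrefl_of lt i.1)
      · exact absurd (trans_of lt hltb' hi) (irrefl_of lt i.1)
    have hremc : Multiset.count i.1 rem = 0 := by
      rw [Multiset.count_eq_zero]
      intro hmem
      rcases hbmax i.1 hmem with h' | h'
      · exact absurd (trans_of lt h' hi) (irrefl_of lt i.1)
      · rw [h'] at hi; exact absurd hi (irrefl_of lt b)
    rw [hadd, hremc]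
  · rw [cmeasure_apply, cmeasure_apply, hx, hy]
    simp only [show ((⟨b, hbγ⟩ : {ξ : Ξ // d ξ ≤ γ}) : Ξ) = b from rfl]
    rw [Multiset.count_add, Multiset.count_add]
    have hadd : Multiset.count b add = 0 := by
      rw [Multiset.count_eq_zero]
      intro hmem
      obtain ⟨b', hb', hltb'⟩ := hab _ hmem
      rcases hbmax b' hb' with h' | heq
      · exact absurd (trans_of lt hltb' h') (irrefl_of lt b)
      · rw [heq] at hltb'; exact absurd hltb' (irrefl_of lt b)
    rw [hadd]
    have : 0 < Multiset.count b rem := Multiset.count_pos.mpr hb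
    omega

theorem wf_mstep (hlt : IsStrictTotalOrder Ξ lt)
    (hwell : ∀ γ : σ →₀ ℕ, WellFounded (fun u v : {ξ : Ξ // d ξ = γ} => lt u.1 v.1))
    (γ : σ →₀ ℕ) :
    WellFounded (fun x y : {m : Multiset Ξ // degm d m ≤ γ} => MStep d lt x.1 y.1) := by
  haveI := hlt
  haveI : IsTrichotomous {ξ : Ξ // d ξ ≤ γ} (fun a b => lt b.1 a.1) := by
    constructor
    intro a b h1 h2
    rcases trichotomous_of lt a.1 b.1 with h | h | h
    · exact absurd h h2
    · exact Subtype.ext h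
    · exact absurd h h1
  have hswap : WellFounded (Function.swap (fun a b : {ξ : Ξ // d ξ ≤ γ} => lt b.1 a.1)) :=
    wf_le_deg hlt hwell γ
  have hlex := Finsupp.Lex.wellFounded'
    (r := fun a b : {ξ : Ξ // d ξ ≤ γ} => lt b.1 a.1) (s := (· < · : ℕ → ℕ → Prop))
    (fun n => Nat.not_lt_zero n) (Nat.lt_wfRel.wf) hswap
  have := InvImage.wf (cmeasure (d := d) γ) hlex
  exact Subrelation.wf (fun {x y} h => mstep_lex hlt γ h) this

/-- Lifting an `Mlt`-chain into the subtype of multisets of degree `≤ γ`. -/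
theorem mlt_lift (γ : σ →₀ ℕ) {x y : Multiset Ξ} (h : Mlt d lt x y) (hy : degm d y ≤ γ) :
    ∃ (hx : degm d x ≤ γ),
      Relation.TransGen (fun u v : {m : Multiset Ξ // degm d m ≤ γ} => MStep d lt u.1 v.1)
        ⟨x, hx⟩ ⟨y, hy⟩ := by
  induction h with
  | single h =>
    exact ⟨le_trans h.1 hy, Relation.TransGen.single h⟩
  | tail hab hbc ih =>
    rename_i b c
    have hbγ : degm d b ≤ γ := le_trans hbc.1 hy
    obtain ⟨hx, hchain⟩ := ih hbγ
    exact ⟨hx, Relation.TransGen.tail hchain hbc⟩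

theorem wf_mlt (hlt : IsStrictTotalOrder Ξ lt)
    (hwell : ∀ γ : σ →₀ ℕ, WellFounded (fun u v : {ξ : Ξ // d ξ = γ} => lt u.1 v.1))
    (γ : σ →₀ ℕ) :
    WellFounded (fun x y : {m : Multiset Ξ // degm d m ≤ γ} =>
      Relation.TransGen (fun u v : {m : Multiset Ξ // degm d m ≤ γ} => MStep d lt u.1 v.1) x y) :=
  (wf_mstep hlt hwell γ).transGen

theorem mlt_irrefl (hlt : IsStrictTotalOrder Ξ lt)
    (hwell : ∀ γ : σ →₀ ℕ, WellFounded (fun u v : {ξ : Ξ // d ξ = γ} => lt u.1 v.1))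
    (m : Multiset Ξ) : ¬ Mlt d lt m m := by
  intro h
  obtain ⟨hx, hchain⟩ := mlt_lift (d := d) (degm d m) h le_rfl
  have hwf := wf_mlt hlt hwell (d := d) (degm d m)
  exact (hwf.isIrrefl.irrefl _) hchain

end Aux3
noncomputable section Aux4

open scoped DirectSum

variable {k : Type*} [Field k] {σ : Type*} [Nonempty σ] [DecidableEq σ]
  {H : Type*} [Ring H] [Algebra k H] {Ξ : Type*}

theorem zProd_nil (z : Ξ → H) : zProd z ([] : List Ξ) = 1 := rfl

theorem zProd_cons (z : Ξ → H) (a : Ξ) (V : List Ξ) :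
    zProd z (a :: V) = z a * zProd z V := by simp [zProd]

theorem zProd_append (z : Ξ → H) (U V : List Ξ) :
    zProd z (U ++ V) = zProd z U * zProd z V := by simp [zProd]

theorem zProd_replicate (z : Ξ → H) (n : ℕ) (ξ : Ξ) :
    zProd z (List.replicate n ξ) = z ξ ^ n := by
  simp [zProd, List.map_replicate, List.prod_replicate]

theorem degList_nil (d : Ξ → σ →₀ ℕ) : degList d ([] : List Ξ) = 0 := rfl

theorem degList_cons (d : Ξ → σ →₀ ℕ) (a : Ξ) (V : List Ξ) :
    degList d (a :: V) = d a + degList d V := by simp [degList]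

theorem zProd_mem (𝒜 : (σ →₀ ℕ) → Submodule k H) (hH : IsConnGradedAlg (k := k) 𝒜)
    (z : Ξ → H) (d : Ξ → σ →₀ ℕ) (hz : ∀ ξ, z ξ ∈ 𝒜 (d ξ)) (V : List Ξ) :
    zProd z V ∈ 𝒜 (degList d V) := by
  induction V with
  | nil => rw [zProd_nil, degList_nil]; exact hH.2.1
  | cons a V ih =>
    rw [zProd_cons, degList_cons]
    exact hH.2.2.1 _ _ _ (hz a) _ ih

/-- Homogeneous projection of membership in a span of homogeneous elements. -/
theorem mem_span_homog (𝒜 : (σ →₀ ℕ) → Submodule k H) (hi : DirectSum.IsInternal 𝒜)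
    {S : Set H} (hS : ∀ s ∈ S, ∃ δ, s ∈ 𝒜 δ) {γ : σ →₀ ℕ} {x : H}
    (hx : x ∈ Submodule.span k S) (hxγ : x ∈ 𝒜 γ) :
    x ∈ Submodule.span k {s : H | s ∈ S ∧ s ∈ 𝒜 γ} := by
  classical
  set e : (⨁ δ, 𝒜 δ) ≃ₗ[k] H := LinearEquiv.ofBijective (DirectSum.coeLinearMap 𝒜) hi with he
  set π : H →ₗ[k] H :=
    (𝒜 γ).subtype ∘ₗ (DirectSum.component k _ _ γ) ∘ₗ (e.symm : H →ₗ[k] (⨁ δ, 𝒜 δ)) with hπ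
  have hπ_eq : ∀ (δ : σ →₀ ℕ) (w : H) (hw : w ∈ 𝒜 δ), π w = if h : δ = γ then w else 0 := by
    intro δ w hw
    have hsymm : e.symm w = DirectSum.lof k _ (fun δ => 𝒜 δ) δ ⟨w, hw⟩ := by
      apply e.injective
      rw [LinearEquiv.apply_symm_apply]
      rw [he]
      change w = DirectSum.coeLinearMap 𝒜 (DirectSum.lof k _ (fun δ => 𝒜 δ) δ ⟨w, hw⟩)
      rw [DirectSum.lof_eq_of, DirectSum.coeLinearMap_of]
    rw [hπ]
    simp only [LinearMap.coe_comp, Function.comp_apply, LinearEquiv.coe_coe]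
    rw [hsymm, DirectSum.component.of]
    split_ifs with h
    · subst h; rfl
    · rfl
  have hπx : π x = x := by
    have := hπ_eq γ x hxγ
    simpa using this
  have key : ∀ y ∈ Submodule.span k S, π y ∈ Submodule.span k {s : H | s ∈ S ∧ s ∈ 𝒜 γ} := by
    intro y hy
    induction hy using Submodule.span_induction with
    | mem w hw =>
      obtain ⟨δ, hδ⟩ := hS w hw
      rw [hπ_eq δ w hδ]
      split_ifs with h
      · subst h; exact Submodule.subset_span ⟨hw, hδ⟩
      · exact Submodule.zero_mem _
    | zero => rw [map_zero]; exact Submodule.zero_mem _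
    | add u v hu hv ihu ihv => rw [map_add]; exact Submodule.add_mem _ ihu ihv
    | smul a u hu ihu => rw [map_smul]; exact Submodule.smul_mem _ _ ihu
  have := key x hx
  rwa [hπx] at this

end Aux4
noncomputable section Aux5

variable {k : Type*} [Field k] {σ : Type*} [Nonempty σ] [DecidableEq σ]
  {H : Type*} [Ring H] [Algebra k H] {Ξ : Type*}

theorem span_mul_left {S : Set H} {N : Submodule k H} (y : H)
    (hs : ∀ s ∈ S, y * s ∈ N) : ∀ x ∈ Submodule.span k S, y * x ∈ N := by
  intro x hx
  induction hx using Submodule.span_induction with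
  | mem w hw => exact hs w hw
  | zero => rw [mul_zero]; exact N.zero_mem
  | add u v _ _ ihu ihv => rw [mul_add]; exact N.add_mem ihu ihv
  | smul c u _ ihu => rw [mul_smul_comm]; exact N.smul_mem c ihu

theorem span_mul_right {S : Set H} {N : Submodule k H} (y : H)
    (hs : ∀ s ∈ S, s * y ∈ N) : ∀ x ∈ Submodule.span k S, x * y ∈ N := by
  intro x hx
  induction hx using Submodule.span_induction with
  | mem w hw => exact hs w hw
  | zero => rw [zero_mul]; exact N.zero_mem
  | add u v _ _ ihu ihv => rw [add_mul]; exact N.add_mem ihu ihv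
  | smul c u _ ihu => rw [smul_mul_assoc]; exact N.smul_mem c ihu

variable (k) (z : Ξ → H) (d : Ξ → σ →₀ ℕ) (lt : Ξ → Ξ → Prop) (h : Ξ → ℕ∞)

/-- The span of `z_U` over admissible `U` with multiset strictly below `m`. -/
def Low (m : Multiset Ξ) : Submodule k H :=
  Submodule.span k {x : H | ∃ U : List Ξ, Adm lt h U ∧ Mlt d lt (↑U) m ∧ x = zProd z U}

theorem low_mono {m₁ m₂ : Multiset Ξ} (hm : Mlt d lt m₁ m₂) :
    Low k z d lt h m₁ ≤ Low k z d lt h m₂ := by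
  apply Submodule.span_le.mpr
  rintro x ⟨U, hU, hUm, rfl⟩
  exact Submodule.subset_span ⟨U, hU, hUm.trans hm, rfl⟩

theorem mem_low {m : Multiset Ξ} {U : List Ξ} (hU : Adm lt h U)
    (hUm : Mlt d lt (↑U) m) : zProd z U ∈ Low k z d lt h m :=
  Submodule.subset_span ⟨U, hU, hUm, rfl⟩

variable (hlt : IsStrictTotalOrder Ξ lt)

/-- The straightening statement for the multiset `m`. -/
def TRstat (m : Multiset Ξ) : Prop :=
  (∀ W : List Ξ, (↑W : Multiset Ξ) = m →
    ∃ c : k, c ≠ 0 ∧ zProd z W - c • zProd z (sortL hlt m) ∈ Low k z d lt h m) ∧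
  ((¬ ∀ ξ : Ξ, (Multiset.count ξ m : ℕ∞) < h ξ) →
    zProd z (sortL hlt m) ∈ Low k z d lt h m)

/-- Any word whose multiset is strictly below `m` lies in `Low m`. -/
theorem wordLem {m : Multiset Ξ}
    (pack : ∀ m', Mlt d lt m' m → TRstat k z d lt h hlt m')
    {m' : Multiset Ξ} (hm' : Mlt d lt m' m) {W : List Ξ} (hW : (↑W : Multiset Ξ) = m') :
    zProd z W ∈ Low k z d lt h m := by
  obtain ⟨c, hc, hmem⟩ := (pack m' hm').1 W hW
  have hsort : zProd z (sortL hlt m') ∈ Low k z d lt h m := by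
    by_cases hcnt : ∀ ξ : Ξ, (Multiset.count ξ m' : ℕ∞) < h ξ
    · refine mem_low k z d lt h (adm_sortL hlt hcnt) ?_
      rw [sortL_coe hlt]; exact hm'
    · exact low_mono k z d lt h hm' ((pack m' hm').2 hcnt)
  have : zProd z W = (zProd z W - c • zProd z (sortL hlt m')) + c • zProd z (sortL hlt m') := by
    abel
  rw [this]
  exact Submodule.add_mem _ (low_mono k z d lt h hm' hmem) (Submodule.smul_mem _ _ hsort)

end Aux5
noncomputable section Aux6

variable {k : Type*} [Field k] {σ : Type*} [Nonempty σ] [DecidableEq σ]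
  {H : Type*} [Ring H] [Algebra k H] {Ξ : Type*}

theorem deg_unique (𝒜 : (σ →₀ ℕ) → Submodule k H) (hi : DirectSum.IsInternal 𝒜)
    {x : H} {δ γ : σ →₀ ℕ} (hδ : x ∈ 𝒜 δ) (hγ : x ∈ 𝒜 γ) (hx : x ≠ 0) : δ = γ := by
  by_contra hne
  have hind := hi.submodule_iSupIndep
  have := hind δ
  have hmem : x ∈ 𝒜 δ ⊓ ⨆ (j : σ →₀ ℕ) (_ : j ≠ δ), 𝒜 j := by
    refine ⟨hδ, ?_⟩
    exact Submodule.mem_iSup_of_mem γ (Submodule.mem_iSup_of_mem (Ne.symm hne) hγ)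
  rw [iSupIndep_def] at hind
  have := (hind δ).eq_bot ▸ hmem
  rw [Submodule.disjoint_def] at *
  exact hx ((hind δ).eq_bot ▸ hmem : x ∈ (⊥ : Submodule k H))

theorem list_coe_cons (a : Ξ) (V : List Ξ) :
    ((a :: V : List Ξ) : Multiset Ξ) = a ::ₘ (V : Multiset Ξ) := rfl

theorem list_coe_append (U V : List Ξ) :
    ((U ++ V : List Ξ) : Multiset Ξ) = (U : Multiset Ξ) + (V : Multiset Ξ) := by
  simp

variable (𝒜 : (σ →₀ ℕ) → Submodule k H) (z : Ξ → H) (d : Ξ → σ →₀ ℕ) (lt : Ξ → Ξ → Prop)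
  (h : Ξ → ℕ∞) (a : Ξ → Ξ → k)

theorem insLem (hH : IsConnGradedAlg (k := k) 𝒜) (hz : ∀ ξ, z ξ ∈ 𝒜 (d ξ))
    (hlt : IsStrictTotalOrder Ξ lt)
    (hcomm : ∀ μ ν : Ξ, lt μ ν → a ν μ ≠ 0 ∧
      z ν * z μ - a ν μ • (z μ * z ν) ∈ Hspan (k := k) z lt h ν) :
    ∀ (V : List Ξ) (m0 : Multiset Ξ),
    (∀ m', Mlt d lt m' m0 → TRstat k z d lt h hlt m') → ∀ (ξ : Ξ),
    List.Pairwise (rr lt) V → (↑(ξ :: V) : Multiset Ξ) = m0 →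
    ∃ c : k, c ≠ 0 ∧ z ξ * zProd z V - c • zProd z (sortL hlt m0) ∈ Low k z d lt h m0 := by
  haveI := hlt
  haveI := rr_trans hlt
  intro V
  induction V with
  | nil =>
    intro m0 pack ξ hV hcoe
    refine ⟨1, one_ne_zero, ?_⟩
    have hsorted : List.Pairwise (rr lt) [ξ] := List.pairwise_singleton _ ξ
    have : ([ξ] : List Ξ) = sortL hlt m0 := by
      rw [← hcoe]; exact eq_sortL hlt hsorted
    rw [← this, one_smul]
    have : z ξ * zProd z ([] : List Ξ) = zProd z [ξ] := by
      rw [zProd_nil, zProd_cons, zProd_nil]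
    rw [this, sub_self]
    exact Submodule.zero_mem _
  | cons μ V' ih =>
    intro m0 pack ξ hV hcoe
    by_cases hrξμ : rr lt ξ μ
    · -- already sorted
      refine ⟨1, one_ne_zero, ?_⟩
      have hsorted : List.Pairwise (rr lt) (ξ :: μ :: V') := by
        rw [List.pairwise_cons]
        refine ⟨fun b hb => ?_, hV⟩
        rcases List.mem_cons.mp hb with rfl | hb'
        · exact hrξμ
        · exact trans_of (rr lt) hrξμ ((List.pairwise_cons.mp hV).1 b hb')
      have heq : (ξ :: μ :: V' : List Ξ) = sortL hlt m0 := by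
        rw [← hcoe]; exact eq_sortL hlt hsorted
      rw [← heq, one_smul, ← zProd_cons, sub_self]
      exact Submodule.zero_mem _
    · -- need to commute
      have hltμξ : lt μ ξ := by
        rcases trichotomous_of lt ξ μ with h' | h' | h'
        · exact absurd (Or.inl h') hrξμ
        · exact absurd (Or.inr h') hrξμ
        · exact h'
      -- the smaller multiset
      set m0' : Multiset Ξ := ((ξ :: V' : List Ξ) : Multiset Ξ) with hm0'
      have hm0eq : m0 = m0' + {μ} := by
        rw [← hcoe, hm0', list_coe_cons, list_coe_cons, list_coe_cons]
        rw [Multiset.cons_swap]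
        rw [← Multiset.singleton_add, add_comm]
      have hm0'lt : Mlt d lt m0' m0 := by
        rw [hm0eq]
        exact (MStep.of_le_add m0' (by simp)).mlt
      have pack' : ∀ m', Mlt d lt m' m0' → TRstat k z d lt h hlt m' :=
        fun m' hm' => pack m' (hm'.trans hm0'lt)
      obtain ⟨c', hc', hl'⟩ := ih m0' pack' ξ hV.of_cons rfl
      set S' : List Ξ := sortL hlt m0' with hS'
      set l' : H := z ξ * zProd z V' - c' • zProd z S' with hl'def
      -- the sorted word for m0 is μ :: S'
      have hS'sorted : List.Pairwise (rr lt) S' := sortL_sorted hlt m0'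
      have hμS' : List.Pairwise (rr lt) (μ :: S') := by
        rw [List.pairwise_cons]
        refine ⟨fun b hb => ?_, hS'sorted⟩
        have hbmem : b ∈ m0' := by
          rw [← sortL_coe hlt m0']; exact Multiset.mem_coe.mpr hb
        rw [hm0', list_coe_cons] at hbmem
        rcases Multiset.mem_cons.mp hbmem with rfl | hb'
        · exact Or.inl hltμξ
        · exact (List.pairwise_cons.mp hV).1 b (Multiset.mem_coe.mp hb')
      have hμS'coe : ((μ :: S' : List Ξ) : Multiset Ξ) = m0 := by
        rw [list_coe_cons, hS', sortL_coe hlt, hm0eq, ← Multiset.singleton_add, add_comm]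
      have hsorteq : (μ :: S' : List Ξ) = sortL hlt m0 := by
        rw [← hμS'coe]; exact eq_sortL hlt hμS'
      have hzsort : z μ * zProd z S' = zProd z (sortL hlt m0) := by
        rw [← hsorteq, zProd_cons]
      -- commutation
      obtain ⟨ha, hE⟩ := hcomm μ ξ hltμξ
      set E : H := z ξ * z μ - a ξ μ • (z μ * z ξ) with hEdef
      have hE𝒜 : E ∈ 𝒜 (d ξ + d μ) := by
        refine Submodule.sub_mem _ (hH.2.2.1 _ _ _ (hz ξ) _ (hz μ)) (Submodule.smul_mem _ _ ?_)
        rw [add_comm]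
        exact hH.2.2.1 _ _ _ (hz μ) _ (hz ξ)
      -- project E onto its degree component
      have hEproj : E ∈ Submodule.span k
          {s : H | s ∈ {x : H | ∃ V0 : List Ξ, Adm lt h V0 ∧ (∀ ν ∈ V0.getLast?, lt ν ξ) ∧
            x = zProd z V0} ∧ s ∈ 𝒜 (d ξ + d μ)} := by
        refine mem_span_homog 𝒜 hH.1 ?_ hE hE𝒜
        rintro s ⟨V0, hV0, hlast, rfl⟩
        exact ⟨degList d V0, zProd_mem 𝒜 hH z d hz V0⟩
      -- E * zProd V' lands in Low m0
      have hEV' : E * zProd z V' ∈ Low k z d lt h m0 := by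
        refine span_mul_right (zProd z V') ?_ E hEproj
        rintro s ⟨⟨U, hUadm, hUlast, rfl⟩, hUdeg⟩
        by_cases hU0 : zProd z U = 0
        · rw [hU0, zero_mul]; exact Submodule.zero_mem _
        have hdegU : degList d U = d ξ + d μ :=
          deg_unique 𝒜 hH.1 (zProd_mem 𝒜 hH z d hz U) hUdeg hU0
        have hstep : MStep d lt ((U : Multiset Ξ) + (V' : Multiset Ξ)) m0 := by
          have hm0eq2 : m0 = (V' : Multiset Ξ) + (ξ ::ₘ {μ}) := by
            rw [← hcoe, list_coe_cons, list_coe_cons, ← Multiset.singleton_add,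
              ← Multiset.singleton_add, ← Multiset.singleton_add]
            rw [show ({ξ} : Multiset Ξ) + ({μ} + (V' : Multiset Ξ))
              = (V' : Multiset Ξ) + ({ξ} + {μ}) by abel]
          refine ⟨?_, (V' : Multiset Ξ), (U : Multiset Ξ), ξ ::ₘ {μ}, ?_, hm0eq2, add_comm _ _, ?_⟩
          · apply le_of_eq
            rw [hm0eq2, degm_add, degm_add, degm_coe, hdegU]
            have : degm d (ξ ::ₘ {μ}) = d ξ + d μ := by
              simp [degm]
            rw [this]
            abel
          · simp
          · intro x hx
            refine ⟨ξ, Multiset.mem_cons_self _ _, ?_⟩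
            refine all_lt_of_sorted_getLast hlt ?_ hUlast x (Multiset.mem_coe.mp hx)
            exact ((adm_iff hlt).mp hUadm).1
        have : zProd z U * zProd z V' = zProd z (U ++ V') := (zProd_append z U V').symm
        rw [this]
        exact wordLem k z d lt h hlt pack hstep.mlt (list_coe_append U V')
      -- z μ * l' lands in Low m0
      have hμl' : z μ * l' ∈ Low k z d lt h m0 := by
        refine span_mul_left (z μ) ?_ l' hl'
        rintro s ⟨U', hU'adm, hU'lt, rfl⟩
        have : z μ * zProd z U' = zProd z (μ :: U') := (zProd_cons z μ U').symm
        rw [this]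
        refine wordLem k z d lt h hlt pack ?_ rfl
        have : Mlt d lt ({μ} + (U' : Multiset Ξ)) ({μ} + m0') := Mlt.add_left _ hU'lt
        rw [list_coe_cons, ← Multiset.singleton_add]
        rwa [hm0eq, add_comm m0' {μ}]
      -- final computation
      refine ⟨a ξ μ * c', mul_ne_zero ha hc', ?_⟩
      have h1 : z ξ * zProd z V' = c' • zProd z S' + l' := by rw [hl'def]; abel
      have h2 : z ξ * z μ = a ξ μ • (z μ * z ξ) + E := by rw [hEdef]; abel
      have hcalc : z ξ * zProd z (μ :: V') - (a ξ μ * c') • zProd z (sortL hlt m0)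
          = a ξ μ • (z μ * l') + E * zProd z V' := by
        rw [zProd_cons, ← mul_assoc, h2, add_mul, smul_mul_assoc, mul_assoc, h1,
          mul_add, mul_smul_comm, hzsort, smul_add, smul_smul]
        abel
      rw [hcalc]
      exact Submodule.add_mem _ (Submodule.smul_mem _ _ hμl') hEV'

end Aux6
noncomputable section Aux7

variable {k : Type*} [Field k] {σ : Type*} [Nonempty σ] [DecidableEq σ]
  {H : Type*} [Ring H] [Algebra k H] {Ξ : Type*}

variable (𝒜 : (σ →₀ ℕ) → Submodule k H) (z : Ξ → H) (d : Ξ → σ →₀ ℕ) (lt : Ξ → Ξ → Prop)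
  (h : Ξ → ℕ∞) (a : Ξ → Ξ → k)

theorem stepLem (hH : IsConnGradedAlg (k := k) 𝒜) (hz : ∀ ξ, z ξ ∈ 𝒜 (d ξ))
    (hlt : IsStrictTotalOrder Ξ lt) (hh : ∀ ξ, 2 ≤ h ξ)
    (hpow : ∀ ξ : Ξ, ∀ n : ℕ, h ξ = (n : ℕ∞) → z ξ ^ n ∈ Hspan (k := k) z lt h ξ)
    (hcomm : ∀ μ ν : Ξ, lt μ ν → a ν μ ≠ 0 ∧
      z ν * z μ - a ν μ • (z μ * z ν) ∈ Hspan (k := k) z lt h ν)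
    (m : Multiset Ξ) (pack : ∀ m', Mlt d lt m' m → TRstat k z d lt h hlt m') :
    TRstat k z d lt h hlt m := by
  haveI := hlt
  have hTR : ∀ W : List Ξ, (↑W : Multiset Ξ) = m →
      ∃ c : k, c ≠ 0 ∧ zProd z W - c • zProd z (sortL hlt m) ∈ Low k z d lt h m := by
    intro W hW
    cases W with
    | nil =>
      refine ⟨1, one_ne_zero, ?_⟩
      have hsort : ([] : List Ξ) = sortL hlt m := by
        rw [← hW]; exact eq_sortL hlt List.Pairwise.nil
      rw [← hsort, one_smul, sub_self]
      exact Submodule.zero_mem _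
    | cons ξ W' =>
      set m' : Multiset Ξ := ((W' : List Ξ) : Multiset Ξ) with hm'def
      have hmeq : m = m' + {ξ} := by
        rw [← hW, list_coe_cons, ← Multiset.singleton_add, add_comm]
      have hm'lt : Mlt d lt m' m := by
        rw [hmeq]; exact (MStep.of_le_add m' (by simp)).mlt
      obtain ⟨c1, hc1, hl1⟩ := (pack m' hm'lt).1 W' rfl
      set S1 : List Ξ := sortL hlt m' with hS1
      set l1 : H := zProd z W' - c1 • zProd z S1 with hl1def
      have hcoe2 : ((ξ :: S1 : List Ξ) : Multiset Ξ) = m := by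
        rw [list_coe_cons, hS1, sortL_coe hlt, hmeq, ← Multiset.singleton_add, add_comm]
      obtain ⟨c2, hc2, hl2mem⟩ :=
        insLem 𝒜 z d lt h a hH hz hlt hcomm S1 m pack ξ (sortL_sorted hlt m') hcoe2
      set l2 : H := z ξ * zProd z S1 - c2 • zProd z (sortL hlt m) with hl2def
      have hξl1 : z ξ * l1 ∈ Low k z d lt h m := by
        refine span_mul_left (z ξ) ?_ l1 hl1
        rintro s ⟨U, hUadm, hUlt, rfl⟩
        have : z ξ * zProd z U = zProd z (ξ :: U) := (zProd_cons z ξ U).symm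
        rw [this]
        refine wordLem k z d lt h hlt pack ?_ rfl
        have : Mlt d lt ({ξ} + (U : Multiset Ξ)) ({ξ} + m') := Mlt.add_left _ hUlt
        rw [list_coe_cons, ← Multiset.singleton_add]
        rwa [hmeq, add_comm m' {ξ}]
      refine ⟨c1 * c2, mul_ne_zero hc1 hc2, ?_⟩
      have h1 : zProd z W' = c1 • zProd z S1 + l1 := by rw [hl1def]; abel
      have h2 : z ξ * zProd z S1 = c2 • zProd z (sortL hlt m) + l2 := by rw [hl2def]; abel
      have hcalc : zProd z (ξ :: W') - (c1 * c2) • zProd z (sortL hlt m)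
          = c1 • l2 + z ξ * l1 := by
        rw [zProd_cons, h1, mul_add, mul_smul_comm, h2, smul_add, smul_smul]
        abel
      rw [hcalc]
      exact Submodule.add_mem _ (Submodule.smul_mem _ _ hl2mem) hξl1
  refine ⟨hTR, ?_⟩
  intro hcnt
  push_neg at hcnt
  obtain ⟨ξ0, hξ0⟩ := hcnt
  have hne : h ξ0 ≠ ⊤ := by
    intro htop
    rw [htop] at hξ0
    exact absurd (top_le_iff.mp hξ0) (by simp)
  obtain ⟨n0, hn0eq⟩ : ∃ n0 : ℕ, h ξ0 = (n0 : ℕ∞) := by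
    cases hh0 : h ξ0 with
    | top => exact absurd hh0 hne
    | coe n => exact ⟨n, rfl⟩
  have hn0le : n0 ≤ Multiset.count ξ0 m := by
    rw [hn0eq] at hξ0
    exact_mod_cast hξ0
  have hn02 : 2 ≤ n0 := by
    have := hh ξ0
    rw [hn0eq] at this
    exact_mod_cast this
  have hn0ne : n0 ≠ 0 := by omega
  set rep : Multiset Ξ := Multiset.replicate n0 ξ0 with hrepdef
  have hrep_le : rep ≤ m := Multiset.le_count_iff_replicate_le.mp hn0le
  have hrep_ne : rep ≠ 0 := by
    rw [hrepdef]
    intro h0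
    have := congrArg Multiset.card h0
    simp at this
    exact hn0ne this
  set R : List Ξ := (m - rep).toList with hRdef
  have hRcoe : ((R : List Ξ) : Multiset Ξ) = m - rep := Multiset.coe_toList _
  have hWm : ((List.replicate n0 ξ0 ++ R : List Ξ) : Multiset Ξ) = m := by
    rw [list_coe_append, hRcoe, Multiset.coe_replicate]
    exact add_tsub_cancel_of_le hrep_le
  set γ0 : σ →₀ ℕ := degList d (List.replicate n0 ξ0) with hγ0
  have hpow𝒜 : z ξ0 ^ n0 ∈ 𝒜 γ0 := by
    rw [← zProd_replicate]
    exact zProd_mem 𝒜 hH z d hz _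
  have hproj : z ξ0 ^ n0 ∈ Submodule.span k
      {s : H | s ∈ {x : H | ∃ V0 : List Ξ, Adm lt h V0 ∧ (∀ ν ∈ V0.getLast?, lt ν ξ0) ∧
        x = zProd z V0} ∧ s ∈ 𝒜 γ0} := by
    refine mem_span_homog 𝒜 hH.1 ?_ (hpow ξ0 n0 hn0eq) hpow𝒜
    rintro s ⟨V0, hV0, hlast, rfl⟩
    exact ⟨degList d V0, zProd_mem 𝒜 hH z d hz V0⟩
  have hWLow : zProd z (List.replicate n0 ξ0 ++ R) ∈ Low k z d lt h m := by
    rw [zProd_append, zProd_replicate]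
    refine span_mul_right (zProd z R) ?_ _ hproj
    rintro s ⟨⟨U, hUadm, hUlast, rfl⟩, hUdeg⟩
    by_cases hU0 : zProd z U = 0
    · rw [hU0, zero_mul]; exact Submodule.zero_mem _
    have hdegU : degList d U = γ0 :=
      deg_unique 𝒜 hH.1 (zProd_mem 𝒜 hH z d hz U) hUdeg hU0
    have hstep : MStep d lt ((U : Multiset Ξ) + (R : Multiset Ξ)) m := by
      refine ⟨?_, (R : Multiset Ξ), (U : Multiset Ξ), rep, hrep_ne, ?_, add_comm _ _, ?_⟩
      · apply le_of_eq
        have hmeq : m = (R : Multiset Ξ) + rep := by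
          rw [hRcoe]
          exact (tsub_add_cancel_of_le hrep_le).symm
        rw [hmeq, degm_add, degm_add, degm_coe, hdegU]
        have : degm d rep = γ0 := by
          rw [hrepdef, ← Multiset.coe_replicate, degm_coe, hγ0]
        rw [this]
        abel
      · rw [hRcoe]
        exact (tsub_add_cancel_of_le hrep_le).symm
      · intro x hx
        refine ⟨ξ0, Multiset.mem_replicate.mpr ⟨hn0ne, rfl⟩, ?_⟩
        refine all_lt_of_sorted_getLast hlt ?_ hUlast x (Multiset.mem_coe.mp hx)
        exact ((adm_iff hlt).mp hUadm).1
    have : zProd z U * zProd z R = zProd z (U ++ R) := (zProd_append z U R).symm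
    rw [this]
    exact wordLem k z d lt h hlt pack hstep.mlt (list_coe_append U R)
  obtain ⟨c, hc, hl⟩ := hTR (List.replicate n0 ξ0 ++ R) hWm
  have : zProd z (sortL hlt m) = c⁻¹ • (zProd z (List.replicate n0 ξ0 ++ R)
      - (zProd z (List.replicate n0 ξ0 ++ R) - c • zProd z (sortL hlt m))) := by
    rw [sub_sub_cancel, smul_smul, inv_mul_cancel₀ hc, one_smul]
  rw [this]
  exact Submodule.smul_mem _ _ (Submodule.sub_mem _ hWLow hl)

theorem TR_all (hH : IsConnGradedAlg (k := k) 𝒜) (hz : ∀ ξ, z ξ ∈ 𝒜 (d ξ))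
    (hlt : IsStrictTotalOrder Ξ lt) (hh : ∀ ξ, 2 ≤ h ξ)
    (hpow : ∀ ξ : Ξ, ∀ n : ℕ, h ξ = (n : ℕ∞) → z ξ ^ n ∈ Hspan (k := k) z lt h ξ)
    (hcomm : ∀ μ ν : Ξ, lt μ ν → a ν μ ≠ 0 ∧
      z ν * z μ - a ν μ • (z μ * z ν) ∈ Hspan (k := k) z lt h ν)
    (hwell : ∀ γ : σ →₀ ℕ, WellFounded (fun u v : {ξ : Ξ // d ξ = γ} => lt u.1 v.1))
    (m : Multiset Ξ) : TRstat k z d lt h hlt m := by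
  have key : ∀ (γ : σ →₀ ℕ) (x : {m' : Multiset Ξ // degm d m' ≤ γ}),
      TRstat k z d lt h hlt x.1 := by
    intro γ
    have hwf := wf_mlt (d := d) hlt hwell γ
    intro x
    induction x using WellFounded.induction hwf with
    | _ x ih =>
      refine stepLem 𝒜 z d lt h a hH hz hlt hh hpow hcomm x.1 ?_
      intro m' hm'
      obtain ⟨hx', hchain⟩ := mlt_lift γ hm' x.2
      exact ih ⟨m', hx'⟩ hchain
  exact key (degm d m) ⟨m, le_rfl⟩

end Aux7
noncomputable section Aux8

variable {k : Type*} [Field k] {H : Type*} [Ring H] [Algebra k H]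

theorem finset_exists_maximal {ι : Type*} (R : ι → ι → Prop) (htrans : Transitive R)
    (hirr : Irreflexive R) (s : Finset ι) (hs : s.Nonempty) :
    ∃ i0 ∈ s, ∀ i ∈ s, ¬ R i0 i := by
  classical
  induction s using Finset.strongInduction with
  | _ s ih =>
    obtain ⟨x, hx⟩ := hs
    set s' : Finset ι := s.filter (fun i => R x i) with hs'
    by_cases hs'ne : s'.Nonempty
    · have hss : s' ⊂ s := by
        refine Finset.ssubset_iff_of_subset (Finset.filter_subset _ _) |>.mpr ?_
        exact ⟨x, hx, by simp [hs', hirr x]⟩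
      obtain ⟨i0, hi0s', hi0max⟩ := ih s' hss hs'ne
      have hi0s : i0 ∈ s := (Finset.filter_subset _ _) hi0s'
      refine ⟨i0, hi0s, fun i his hRi => ?_⟩
      have hxi0 : R x i0 := (Finset.mem_filter.mp hi0s').2
      have hxi : R x i := htrans hxi0 hRi
      exact hi0max i (Finset.mem_filter.mpr ⟨his, hxi⟩) hRi
    · refine ⟨x, hx, fun i his hRi => ?_⟩
      exact hs'ne ⟨i, Finset.mem_filter.mpr ⟨his, hRi⟩⟩

theorem li_triangular {ι ι' : Type*} (b : ι → H) (hb : LinearIndependent k b)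
    (R : ι' → ι' → Prop) (htrans : Transitive R) (hirr : Irreflexive R)
    (g : ι' → ι) (hg : Function.Injective g)
    (zf : ι' → H) (c : ι' → k) (hc : ∀ i, c i ≠ 0)
    (hzb : ∀ i : ι', zf i - c i • b (g i) ∈ Submodule.span k (b '' (g '' {j | R j i}))) :
    LinearIndependent k zf := by
  classical
  rw [linearIndependent_iff']
  intro s
  induction s using Finset.strongInduction with
  | _ s ih =>
    intro f hsum
    rcases s.eq_empty_or_nonempty with rfl | hsne
    · intro i hi; cases hi
    obtain ⟨i0, hi0s, hi0max⟩ := finset_exists_maximal R htrans hirr s hsne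
    set N : Submodule k H := Submodule.span k (b '' {j : ι | j ≠ g i0}) with hN
    have hwN : ∀ i ∈ s, zf i - c i • b (g i) ∈ N := by
      intro i his
      refine Submodule.span_le.mpr ?_ (hzb i)
      rintro x ⟨j, ⟨j', hj', rfl⟩, rfl⟩
      refine Submodule.subset_span (Set.mem_image_of_mem b ?_)
      intro hgj
      have : j' = i0 := hg hgj
      subst this
      exact hi0max i his hj'
    have hbN : ∀ i ∈ s, i ≠ i0 → (f i * c i) • b (g i) ∈ N := by
      intro i his hne
      refine Submodule.smul_mem _ _ (Submodule.subset_span ?_)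
      exact Set.mem_image_of_mem b (fun hgi => hne (hg hgi))
    have hkey : (f i0 * c i0) • b (g i0) ∈ N := by
      have hrw : ∀ i, f i • zf i = (f i * c i) • b (g i) + f i • (zf i - c i • b (g i)) := by
        intro i
        rw [smul_sub, smul_smul]
        abel
      have hsum2 : ∑ i ∈ s, ((f i * c i) • b (g i) + f i • (zf i - c i • b (g i))) = 0 := by
        rw [← Finset.sum_congr rfl (fun i _ => hrw i)]
        exact hsum
      rw [Finset.sum_add_distrib] at hsum2
      have h1 : ∑ i ∈ s, f i • (zf i - c i • b (g i)) ∈ N :=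
        Submodule.sum_mem _ (fun i his => Submodule.smul_mem _ _ (hwN i his))
      have h2 : ∑ i ∈ s.erase i0, (f i * c i) • b (g i) ∈ N :=
        Submodule.sum_mem _ (fun i his =>
          hbN i (Finset.mem_of_mem_erase his) (Finset.ne_of_mem_erase his))
      have hsplit : ∑ i ∈ s, (f i * c i) • b (g i)
          = (f i0 * c i0) • b (g i0) + ∑ i ∈ s.erase i0, (f i * c i) • b (g i) :=
        (Finset.add_sum_erase s _ hi0s).symm
      have h0 : (f i0 * c i0) • b (g i0)
          = -(∑ i ∈ s.erase i0, (f i * c i) • b (g i)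
              + ∑ i ∈ s, f i • (zf i - c i • b (g i))) := by
        apply eq_neg_of_add_eq_zero_left
        rw [← add_assoc, ← hsplit]
        exact hsum2
      rw [h0, neg_add]
      exact Submodule.add_mem _ (Submodule.neg_mem _ h2) (Submodule.neg_mem _ h1)
    have hf0 : f i0 = 0 := by
      by_contra hne
      have hcne : f i0 * c i0 ≠ 0 := mul_ne_zero hne (hc i0)
      have : b (g i0) ∈ N := by
        have := Submodule.smul_mem N (f i0 * c i0)⁻¹ hkey
        rwa [smul_smul, inv_mul_cancel₀ hcne, one_smul] at this
      exact hb.notMem_span_image (by simp : g i0 ∉ {j : ι | j ≠ g i0}) this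
    have hsum' : ∑ i ∈ s.erase i0, f i • zf i = 0 := by
      have := Finset.add_sum_erase s (fun i => f i • zf i) hi0s
      simp only [hf0, zero_smul, zero_add] at this
      rw [this]
      exact hsum
    have hrest := ih (s.erase i0) (Finset.erase_ssubset hi0s) f hsum'
    intro i his
    rcases eq_or_ne i i0 with rfl | hne
    · exact hf0
    · exact hrest i (Finset.mem_erase.mpr ⟨hne, his⟩)

end Aux8
/-- **Proposition (change of order).** Under conditions (a)–(c) for the total order `◁`,
if the family `{z_V : V ∈ P(Ξ,◁,h)}` is linearly independent (resp. spans `H`), then for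
any total order `<` on `Ξ` the family `{z_V : V ∈ P(Ξ,<,h)}` is linearly independent
(resp. spans `H`). -/
theorem change_of_order
    {k σ H : Type*} [Field k] [Nonempty σ] [DecidableEq σ] [Ring H] [Algebra k H]
    (𝒜 : (σ →₀ ℕ) → Submodule k H) (hH : IsConnGradedAlg (k := k) 𝒜)
    {Ξ : Type*} (z : Ξ → H) (d : Ξ → σ →₀ ℕ)
    (hz : ∀ ξ, z ξ ∈ 𝒜 (d ξ)) (hd : ∀ ξ, d ξ ≠ 0)
    (lt : Ξ → Ξ → Prop) (hlt : IsStrictTotalOrder Ξ lt)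
    (h : Ξ → ℕ∞) (hh : ∀ ξ, 2 ≤ h ξ)
    (a : Ξ → Ξ → k)
    -- condition (a)
    (hpow : ∀ ξ : Ξ, ∀ m : ℕ, h ξ = (m : ℕ∞) → z ξ ^ m ∈ Hspan (k := k) z lt h ξ)
    -- condition (b)
    (hcomm : ∀ μ ν : Ξ, lt μ ν → a ν μ ≠ 0 ∧
      z ν * z μ - a ν μ • (z μ * z ν) ∈ Hspan (k := k) z lt h ν)
    -- condition (c)
    (hwell : ∀ γ : σ →₀ ℕ, WellFounded (fun u v : {ξ : Ξ // d ξ = γ} => lt u.1 v.1)) :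
    (LinearIndependent k (fun V : {V : List Ξ // Adm lt h V} => zProd z V.1) →
      ∀ lt' : Ξ → Ξ → Prop, IsStrictTotalOrder Ξ lt' →
        LinearIndependent k (fun V : {V : List Ξ // Adm lt' h V} => zProd z V.1)) ∧
    (Submodule.span k {x : H | ∃ V : List Ξ, Adm lt h V ∧ x = zProd z V} = ⊤ →
      ∀ lt' : Ξ → Ξ → Prop, IsStrictTotalOrder Ξ lt' →
        Submodule.span k {x : H | ∃ V : List Ξ, Adm lt' h V ∧ x = zProd z V} = ⊤) := by
  classical
  haveI := hlt
  have hTR := TR_all 𝒜 z d lt h a hH hz hlt hh hpow hcomm hwell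
  constructor
  · -- linear independence transfers
    intro hli lt' hlt'
    haveI := hlt'
    have hgadm : ∀ V : {V : List Ξ // Adm lt' h V},
        Adm lt h (sortL hlt ((V.1 : List Ξ) : Multiset Ξ)) := fun V =>
      adm_sortL hlt ((adm_iff hlt').mp V.2).2
    set b : {V : List Ξ // Adm lt h V} → H := fun V => zProd z V.1 with hbdef
    set g : {V : List Ξ // Adm lt' h V} → {V : List Ξ // Adm lt h V} :=
      fun V => ⟨sortL hlt ((V.1 : List Ξ) : Multiset Ξ), hgadm V⟩ with hgdef
    have hginj : Function.Injective g := by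
      intro V W hVW
      have h1 : sortL hlt ((V.1 : List Ξ) : Multiset Ξ)
          = sortL hlt ((W.1 : List Ξ) : Multiset Ξ) := congrArg Subtype.val hVW
      have h2 : ((V.1 : List Ξ) : Multiset Ξ) = ((W.1 : List Ξ) : Multiset Ξ) := by
        rw [← sortL_coe hlt ((V.1 : List Ξ) : Multiset Ξ),
          ← sortL_coe hlt ((W.1 : List Ξ) : Multiset Ξ), h1]
      exact Subtype.ext (sorted_unique hlt' ((adm_iff hlt').mp V.2).1
        ((adm_iff hlt').mp W.2).1 h2)
    choose c hc hcmem using fun V : {V : List Ξ // Adm lt' h V} =>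
      (hTR ((V.1 : List Ξ) : Multiset Ξ)).1 V.1 rfl
    have htrans : Transitive
        (fun x y : {V : List Ξ // Adm lt' h V} =>
          Mlt d lt ((x.1 : List Ξ) : Multiset Ξ) ((y.1 : List Ξ) : Multiset Ξ)) := by
      intro x y w hxy hyw
      exact hxy.trans hyw
    have hirr : Irreflexive
        (fun x y : {V : List Ξ // Adm lt' h V} =>
          Mlt d lt ((x.1 : List Ξ) : Multiset Ξ) ((y.1 : List Ξ) : Multiset Ξ)) :=
      fun x => mlt_irrefl hlt hwell _
    refine li_triangular b hli
      (fun x y => Mlt d lt ((x.1 : List Ξ) : Multiset Ξ) ((y.1 : List Ξ) : Multiset Ξ))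
      htrans hirr g hginj _ c hc ?_
    intro i
    have hlow : Low k z d lt h ((i.1 : List Ξ) : Multiset Ξ) ≤ Submodule.span k
        (b '' (g '' {j | Mlt d lt ((j.1 : List Ξ) : Multiset Ξ) ((i.1 : List Ξ) : Multiset Ξ)})) := by
      apply Submodule.span_le.mpr
      rintro x ⟨U, hUadm, hUlt, rfl⟩
      apply Submodule.subset_span
      have hcnt : ∀ ξ, (Multiset.count ξ ((U : List Ξ) : Multiset Ξ) : ℕ∞) < h ξ :=
        ((adm_iff hlt).mp hUadm).2
      have hjadm : Adm lt' h (sortL hlt' ((U : List Ξ) : Multiset Ξ)) := adm_sortL hlt' hcnt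
      have hjcoe : ((sortL hlt' ((U : List Ξ) : Multiset Ξ) : List Ξ) : Multiset Ξ)
          = ((U : List Ξ) : Multiset Ξ) := sortL_coe hlt' _
      have hgj : (g ⟨sortL hlt' ((U : List Ξ) : Multiset Ξ), hjadm⟩).1 = U := by
        simp only [hgdef]
        rw [hjcoe]
        exact (eq_sortL hlt ((adm_iff hlt).mp hUadm).1).symm
      refine ⟨g ⟨sortL hlt' ((U : List Ξ) : Multiset Ξ), hjadm⟩,
        ⟨⟨sortL hlt' ((U : List Ξ) : Multiset Ξ), hjadm⟩, ?_, rfl⟩, ?_⟩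
      · show Mlt d lt ((sortL hlt' ((U : List Ξ) : Multiset Ξ) : List Ξ) : Multiset Ξ)
          ((i.1 : List Ξ) : Multiset Ξ)
        rwa [hjcoe]
      · show zProd z (g ⟨sortL hlt' ((U : List Ξ) : Multiset Ξ), hjadm⟩).1 = zProd z U
        rw [hgj]
    have hmem := hcmem i
    have hbg : b (g i) = zProd z (sortL hlt ((i.1 : List Ξ) : Multiset Ξ)) := rfl
    rw [← hbg] at hmem
    exact hlow hmem
  · -- spanning transfers
    intro hsp lt' hlt'
    haveI := hlt'
    have key : ∀ (γ : σ →₀ ℕ) (x : {m' : Multiset Ξ // degm d m' ≤ γ}),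
        ∀ U : List Ξ, Adm lt h U → ((U : List Ξ) : Multiset Ξ) = x.1 →
        zProd z U ∈ Submodule.span k {x : H | ∃ V, Adm lt' h V ∧ x = zProd z V} := by
      intro γ
      have hwf := wf_mlt (d := d) hlt hwell γ
      intro x
      induction x using WellFounded.induction hwf with
      | _ x ih =>
        intro U hUadm hUx
        have hcnt : ∀ ξ : Ξ, (Multiset.count ξ x.1 : ℕ∞) < h ξ := by
          rw [← hUx]; exact ((adm_iff hlt).mp hUadm).2
        have hW'adm : Adm lt' h (sortL hlt' x.1) := adm_sortL hlt' hcnt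
        have hW'S' : zProd z (sortL hlt' x.1) ∈
            Submodule.span k {x : H | ∃ V, Adm lt' h V ∧ x = zProd z V} :=
          Submodule.subset_span ⟨_, hW'adm, rfl⟩
        obtain ⟨c, hc, hl⟩ := (hTR x.1).1 (sortL hlt' x.1) (sortL_coe hlt' x.1)
        have hsortU : sortL hlt x.1 = U := by
          rw [← hUx]; exact (eq_sortL hlt ((adm_iff hlt).mp hUadm).1).symm
        have hlS' : zProd z (sortL hlt' x.1) - c • zProd z (sortL hlt x.1) ∈
            Submodule.span k {x : H | ∃ V, Adm lt' h V ∧ x = zProd z V} := by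
          refine Submodule.span_le.mpr ?_ hl
          rintro y ⟨U', hU'adm, hU'lt, rfl⟩
          obtain ⟨hx', hchain⟩ := mlt_lift γ hU'lt x.2
          exact ih ⟨_, hx'⟩ hchain U' hU'adm rfl
        have heq : zProd z U = c⁻¹ • (zProd z (sortL hlt' x.1)
            - (zProd z (sortL hlt' x.1) - c • zProd z (sortL hlt x.1))) := by
          rw [sub_sub_cancel, smul_smul, inv_mul_cancel₀ hc, one_smul, hsortU]
        rw [heq]
        exact Submodule.smul_mem _ _ (Submodule.sub_mem _ hW'S' hlS')
    rw [← top_le_iff, ← hsp]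
    apply Submodule.span_le.mpr
    rintro x ⟨U, hUadm, rfl⟩
    exact key (degm d ((U : List Ξ) : Multiset Ξ)) ⟨_, le_rfl⟩ U hUadm rfl

end AdamsPaper
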